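/- For every continuum X there exists a Whitney map μ : 2^X → [0,∞), i.e., a continuous function satisfying: μ({x}) = 0 for all x ∈ X; μ(A) < μ(B) whenever A ⊊ B; and μ(A∪B) ≤ μ(A) + μ(B) − μ(A∩B) whenever A ∩ B ≠ ∅. One such map is μ(A) = Σ_{n≥1} 2^{−n} diam(f_n(A)), where f_n(x) = 1/(1 + d(x_n, x)) for a countable dense set {x_n} in X. -/

import Mathlib

open Metric

section WhitneyAux

variable {X : Type*} [MetricSpace X] [CompactSpace X]

/-- The basic coordinate functions are 1-Lipschitz-type. -/
lemma whitney_f_dist_le (c x y : X) :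
    dist (1 / (1 + dist c x)) (1 / (1 + dist c y)) ≤ dist x y := by
  have hx : (0:ℝ) ≤ dist c x := dist_nonneg
  have hy : (0:ℝ) ≤ dist c y := dist_nonneg
  have hxy : |dist c x - dist c y| ≤ dist x y := by
    simpa [dist_comm] using abs_dist_sub_le x y c
  rw [Real.dist_eq]
  have key : |1 / (1 + dist c x) - 1 / (1 + dist c y)| ≤ |dist c x - dist c y| := by
    have h1 : (0:ℝ) < 1 + dist c x := by linarith
    have h2 : (0:ℝ) < 1 + dist c y := by linarith
    have : 1 / (1 + dist c x) - 1 / (1 + dist c y)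
        = (dist c y - dist c x) / ((1 + dist c x) * (1 + dist c y)) := by
      field_simp
      ring
    rw [this, abs_div, abs_sub_comm]
    have hden : (1:ℝ) ≤ |(1 + dist c x) * (1 + dist c y)| := by
      rw [abs_of_pos (by positivity)]
      nlinarith
    calc |dist c x - dist c y| / |(1 + dist c x) * (1 + dist c y)|
        ≤ |dist c x - dist c y| / 1 := by
          apply div_le_div_of_nonneg_left (abs_nonneg _) one_pos hden
      _ = |dist c x - dist c y| := by rw [div_one]
  linarith

lemma whitney_f_mem (c x : X) : 1 / (1 + dist c x) ∈ Set.Icc (0:ℝ) 1 := by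
  have hx : (0:ℝ) ≤ dist c x := dist_nonneg
  constructor
  · positivity
  · rw [div_le_one (by linarith)]; linarith

lemma whitney_f_cont (c : X) : Continuous (fun x : X => 1 / (1 + dist c x)) := by
  apply Continuous.div continuous_const
  · exact continuous_const.add (continuous_const.dist continuous_id)
  · intro x
    have : (0:ℝ) ≤ dist c x := dist_nonneg
    positivity

lemma whitney_diam_le_one (c : X) (A : Set X) :
    Metric.diam ((fun x => 1 / (1 + dist c x)) '' A) ≤ 1 := by
  apply Metric.diam_le_of_forall_dist_le zero_le_one
  rintro p ⟨x, -, rfl⟩ q ⟨y, -, rfl⟩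
  have h1 := whitney_f_mem c x
  have h2 := whitney_f_mem c y
  rw [Real.dist_eq, abs_le]
  constructor <;> [linarith [h1.1, h2.2]; linarith [h1.2, h2.1]]

lemma whitney_geom_summable : Summable (fun n : ℕ => ((1/2:ℝ))^(n+1)) := by
  have h := (summable_geometric_of_lt_one (by norm_num : (0:ℝ) ≤ 1/2)
    (by norm_num : (1/2:ℝ) < 1)).mul_right (1/2:ℝ)
  simpa [pow_succ] using h

lemma whitney_summable (g : ℕ → ℝ) (h0 : ∀ n, 0 ≤ g n) (h1 : ∀ n, g n ≤ 1) :
    Summable (fun n : ℕ => (1 / 2 : ℝ) ^ (n + 1) * g n) := by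
  refine Summable.of_nonneg_of_le (fun n => mul_nonneg (by positivity) (h0 n)) (fun n => ?_)
    whitney_geom_summable
  have h : (0:ℝ) ≤ (1/2:ℝ)^(n+1) := by positivity
  nlinarith [h1 n]

lemma whitney_geom_sum : (∑' n : ℕ, ((1:ℝ)/2)^(n+1)) = 1 := by
  have h : (fun n : ℕ => ((1:ℝ)/2)^(n+1)) = fun n : ℕ => ((1:ℝ)/2)^n * (1/2) := by
    funext n; rw [pow_succ]
  rw [h, tsum_mul_right, tsum_geometric_of_lt_one (by norm_num) (by norm_num)]
  norm_num

end WhitneyAux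

/-- For every continuum `X`, the map `μ(A) = Σ_{n≥1} 2^{-n} diam (f_n '' A)`, where
`f_n(x) = 1/(1 + d(x_n, x))` for a countable dense set `{x_n}`, is a Whitney map:
continuous with respect to the Hausdorff metric, zero on singletons, strictly monotone
under proper inclusion, and submodular.  In particular a Whitney map exists. -/
theorem exists_whitney_map
    {X : Type*} [MetricSpace X] [CompactSpace X] [ConnectedSpace X] [Nonempty X]
    (xs : ℕ → X) (hdense : DenseRange xs) :
    ∃ μ : Set X → ℝ,
      (∀ A : Set X, μ A =
        ∑' n : ℕ, (1 / 2 : ℝ) ^ (n + 1) *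
          Metric.diam ((fun x => 1 / (1 + dist (xs n) x)) '' A)) ∧
      -- continuity with respect to the Hausdorff metric
      (∀ A : Set X, A.Nonempty → IsClosed A → ∀ ε > 0, ∃ δ > 0,
        ∀ B : Set X, B.Nonempty → IsClosed B → hausdorffDist A B < δ →
          |μ A - μ B| < ε) ∧
      -- (a) zero on singletons
      (∀ x : X, μ {x} = 0) ∧
      -- (b) strict monotonicity
      (∀ A B : Set X, A.Nonempty → IsClosed A → B.Nonempty → IsClosed B →
        A ⊂ B → μ A < μ B) ∧
      -- (c) submodularity
      (∀ A B : Set X, A.Nonempty → IsClosed A → B.Nonempty → IsClosed B →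
        (A ∩ B).Nonempty → μ (A ∪ B) ≤ μ A + μ B - μ (A ∩ B)) := by
  set f : ℕ → X → ℝ := fun n x => 1 / (1 + dist (xs n) x) with hf
  set d : ℕ → Set X → ℝ := fun n A => Metric.diam (f n '' A) with hd
  set μ : Set X → ℝ := fun A => ∑' n : ℕ, (1 / 2 : ℝ) ^ (n + 1) * d n A with hμ
  -- basic facts
  have hd0 : ∀ n A, 0 ≤ d n A := fun n A => Metric.diam_nonneg
  have hd1 : ∀ n A, d n A ≤ 1 := fun n A => whitney_diam_le_one (xs n) A
  have hsum : ∀ A : Set X, Summable (fun n : ℕ => (1 / 2 : ℝ) ^ (n + 1) * d n A) :=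
    fun A => whitney_summable _ (fun n => hd0 n A) (fun n => hd1 n A)
  have hbdd : ∀ (n : ℕ) (A : Set X), IsClosed A → Bornology.IsBounded (f n '' A) :=
    fun n A hA => ((hA.isCompact).image (whitney_f_cont (xs n))).isBounded
  refine ⟨μ, fun A => rfl, ?_, ?_, ?_, ?_⟩
  · -- continuity
    intro A hAne hA ε hε
    refine ⟨ε / 2, by linarith, fun B hBne hB hH => ?_⟩
    set H := hausdorffDist A B with hH'
    have hHne : EMetric.hausdorffEdist A B ≠ ⊤ :=
      Metric.hausdorffEdist_ne_top_of_nonempty_of_bounded hAne hBne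
        hA.isCompact.isBounded hB.isCompact.isBounded
    have hH0 : 0 ≤ H := hausdorffDist_nonneg
    -- one-sided diameter comparison
    have oneside : ∀ (n : ℕ) (C D : Set X), C.Nonempty → IsClosed C → D.Nonempty → IsClosed D →
        EMetric.hausdorffEdist C D ≠ ⊤ →
        d n C ≤ d n D + 2 * hausdorffDist C D := by
      intro n C D hCne hC hDne hD hfin
      have hHD0 : 0 ≤ hausdorffDist C D := hausdorffDist_nonneg
      apply Metric.diam_le_of_forall_dist_le (by positivity)
      rintro p ⟨x, hx, rfl⟩ q ⟨y, hy, rfl⟩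
      obtain ⟨x', hx', hxd⟩ := hD.isCompact.exists_infDist_eq_dist hDne x
      obtain ⟨y', hy', hyd⟩ := hD.isCompact.exists_infDist_eq_dist hDne y
      have h1 : dist x x' ≤ hausdorffDist C D := by
        rw [← hxd]; exact infDist_le_hausdorffDist_of_mem hx hfin
      have h2 : dist y y' ≤ hausdorffDist C D := by
        rw [← hyd]; exact infDist_le_hausdorffDist_of_mem hy hfin
      calc dist (f n x) (f n y)
          ≤ dist (f n x) (f n x') + dist (f n x') (f n y') + dist (f n y') (f n y) :=
            dist_triangle4 _ _ _ _
        _ ≤ dist x x' + d n D + dist y' y := by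
            gcongr
            · exact whitney_f_dist_le (xs n) x x'
            · exact Metric.dist_le_diam_of_mem (hbdd n D hD)
                ⟨x', hx', rfl⟩ ⟨y', hy', rfl⟩
            · exact whitney_f_dist_le (xs n) y' y
        _ ≤ d n D + 2 * hausdorffDist C D := by
            rw [dist_comm y' y]; linarith
    have key : ∀ n : ℕ, |d n A - d n B| ≤ 2 * H := by
      intro n
      rw [abs_sub_le_iff]
      constructor
      · have := oneside n A B hAne hA hBne hB hHne; linarith
      · have := oneside n B A hBne hB hAne hA (by unfold EMetric.hausdorffEdist at hHne ⊢; rwa [Metric.hausdorffEDist_comm])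
        rw [hausdorffDist_comm] at this; linarith
    have hdiff : μ A - μ B = ∑' n : ℕ,
        ((1 / 2 : ℝ) ^ (n + 1) * d n A - (1 / 2 : ℝ) ^ (n + 1) * d n B) := by
      simp only [hμ]; exact ((hsum A).tsum_sub (hsum B)).symm
    have habs : |μ A - μ B| ≤ 2 * H := by
      rw [hdiff]
      have hsummable : Summable (fun n : ℕ =>
          ‖(1 / 2 : ℝ) ^ (n + 1) * d n A - (1 / 2 : ℝ) ^ (n + 1) * d n B‖) := by
        refine Summable.of_nonneg_of_le (fun n => norm_nonneg _) (fun n => ?_)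
          (whitney_geom_summable.mul_right (2 * H))
        rw [Real.norm_eq_abs, ← mul_sub, abs_mul, abs_of_nonneg (by positivity)]
        exact mul_le_mul_of_nonneg_left (key n) (by positivity)
      calc |∑' n : ℕ, ((1 / 2 : ℝ) ^ (n + 1) * d n A - (1 / 2 : ℝ) ^ (n + 1) * d n B)|
          ≤ ∑' n : ℕ, ‖(1 / 2 : ℝ) ^ (n + 1) * d n A - (1 / 2 : ℝ) ^ (n + 1) * d n B‖ :=
            norm_tsum_le_tsum_norm hsummable
        _ ≤ ∑' n : ℕ, (1 / 2 : ℝ) ^ (n + 1) * (2 * H) := by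
            apply Summable.tsum_le_tsum _ hsummable
              (whitney_geom_summable.mul_right _)
            intro n
            rw [Real.norm_eq_abs, ← mul_sub, abs_mul, abs_of_nonneg (by positivity)]
            exact mul_le_mul_of_nonneg_left (key n) (by positivity)
        _ = (∑' n : ℕ, ((1:ℝ)/2) ^ (n + 1)) * (2 * H) := tsum_mul_right
        _ = 2 * H := by rw [whitney_geom_sum, one_mul]
    linarith
  · -- zero on singletons
    intro x
    simp only [hμ, hd, Set.image_singleton, Metric.diam_singleton, mul_zero, tsum_zero]
  · -- strict monotonicity
    intro A B hAne hA hBne hB hAB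
    obtain ⟨x, hxB, hxA⟩ := Set.exists_of_ssubset hAB
    have hr : 0 < infDist x A := (hA.notMem_iff_infDist_pos hAne).1 hxA
    set r := infDist x A with hrr
    obtain ⟨n, hn⟩ := hdense.exists_dist_lt x (by positivity : (0:ℝ) < r/3)
    -- the n-th coordinate separates x from A
    have hfx : 1 / (1 + r/3) < f n x := by
      rw [hf]
      apply div_lt_div_of_pos_left one_pos (by positivity)
      rw [dist_comm] at hn
      linarith
    have hfa : ∀ a ∈ A, f n a ≤ 1 / (1 + 2*r/3) := by
      intro a ha
      have h1 : r ≤ dist x a := infDist_le_dist_of_mem ha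
      have h2 : dist x a ≤ dist x (xs n) + dist (xs n) a := dist_triangle _ _ _
      have h3 : 2*r/3 ≤ dist (xs n) a := by linarith
      rw [hf]
      apply div_le_div_of_nonneg_left one_pos.le (by positivity)
      linarith
    have hc : 1 / (1 + 2*r/3) < 1 / (1 + r/3) := by
      apply div_lt_div_of_pos_left one_pos (by positivity)
      linarith
    set c : ℝ := 1 / (1 + r/3) - 1 / (1 + 2*r/3) with hcc
    have hc0 : 0 < c := by rw [hcc]; linarith
    -- diam comparison at coordinate n
    have hsubim : f n '' A ⊆ f n '' B := Set.image_mono hAB.subset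
    have hAne' : (f n '' A).Nonempty := hAne.image _
    have hBne' : (f n '' B).Nonempty := hBne.image _
    have hdAB : d n A + c ≤ d n B := by
      simp only [hd]
      rw [Real.diam_eq (hbdd n A hA), Real.diam_eq (hbdd n B hB)]
      have hsupA : sSup (f n '' A) ≤ 1 / (1 + 2*r/3) := by
        apply csSup_le hAne'
        rintro p ⟨a, ha, rfl⟩
        exact hfa a ha
      have hsupB : f n x ≤ sSup (f n '' B) :=
        le_csSup (hbdd n B hB).bddAbove ⟨x, hxB, rfl⟩
      have hinfAB : sInf (f n '' B) ≤ sInf (f n '' A) :=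
        csInf_le_csInf (hbdd n B hB).bddBelow hAne' hsubim
      rw [hcc]
      linarith
    -- conclude
    simp only [hμ]
    apply Summable.tsum_lt_tsum_of_nonneg (i := n)
      (fun m => by positivity)
      (fun m => mul_le_mul_of_nonneg_left
        (Metric.diam_mono (Set.image_mono hAB.subset) (hbdd m B hB)) (by positivity))
      _ (hsum B)
    have : d n A < d n B := by linarith
    exact mul_lt_mul_of_pos_left this (by positivity)
  · -- submodularity
    intro A B hAne hA hBne hB hIne
    have hU : IsClosed (A ∪ B) := hA.union hB
    have hI : IsClosed (A ∩ B) := hA.inter hB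
    have key : ∀ n : ℕ, d n (A ∪ B) + d n (A ∩ B) ≤ d n A + d n B := by
      intro n
      simp only [hd]
      have himU : f n '' (A ∪ B) = f n '' A ∪ f n '' B := Set.image_union _ _ _
      rw [himU]
      have hbA := hbdd n A hA
      have hbB := hbdd n B hB
      have hbI := hbdd n (A ∩ B) hI
      have hAne' : (f n '' A).Nonempty := hAne.image _
      have hBne' : (f n '' B).Nonempty := hBne.image _
      have hIne' : (f n '' (A ∩ B)).Nonempty := hIne.image _
      rw [Real.diam_eq (hbA.union hbB), Real.diam_eq hbA, Real.diam_eq hbB,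
        Real.diam_eq hbI,
        csSup_union hbA.bddAbove hAne' hbB.bddAbove hBne',
        csInf_union hbA.bddBelow hAne' hbB.bddBelow hBne']
      have hIsubA : f n '' (A ∩ B) ⊆ f n '' A :=
        Set.image_mono Set.inter_subset_left
      have hIsubB : f n '' (A ∩ B) ⊆ f n '' B :=
        Set.image_mono Set.inter_subset_right
      have h1 : sSup (f n '' (A ∩ B)) ≤ sSup (f n '' A) :=
        csSup_le_csSup hbA.bddAbove hIne' hIsubA
      have h2 : sSup (f n '' (A ∩ B)) ≤ sSup (f n '' B) :=
        csSup_le_csSup hbB.bddAbove hIne' hIsubB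
      have h3 : sInf (f n '' A) ≤ sInf (f n '' (A ∩ B)) :=
        csInf_le_csInf hbA.bddBelow hIne' hIsubA
      have h4 : sInf (f n '' B) ≤ sInf (f n '' (A ∩ B)) :=
        csInf_le_csInf hbB.bddBelow hIne' hIsubB
      have e1 : max (sSup (f n '' A)) (sSup (f n '' B)) + min (sSup (f n '' A)) (sSup (f n '' B))
          = sSup (f n '' A) + sSup (f n '' B) := max_add_min _ _
      have e2 : max (sInf (f n '' A)) (sInf (f n '' B)) + min (sInf (f n '' A)) (sInf (f n '' B))
          = sInf (f n '' A) + sInf (f n '' B) := max_add_min _ _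
      have h5 : sSup (f n '' (A ∩ B)) ≤ min (sSup (f n '' A)) (sSup (f n '' B)) :=
        le_min h1 h2
      have h6 : max (sInf (f n '' A)) (sInf (f n '' B)) ≤ sInf (f n '' (A ∩ B)) :=
        max_le h3 h4
      have hsup_eq : (sSup (f n '' A) ⊔ sSup (f n '' B)) = max (sSup (f n '' A)) (sSup (f n '' B)) := rfl
      have hinf_eq : (sInf (f n '' A) ⊓ sInf (f n '' B)) = min (sInf (f n '' A)) (sInf (f n '' B)) := rfl
      rw [hsup_eq, hinf_eq]
      linarith
    have hgoal : μ (A ∪ B) + μ (A ∩ B) ≤ μ A + μ B := by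
      simp only [hμ]
      rw [← (hsum (A ∪ B)).tsum_add (hsum (A ∩ B)), ← (hsum A).tsum_add (hsum B)]
      apply Summable.tsum_le_tsum _ ((hsum (A ∪ B)).add (hsum (A ∩ B))) ((hsum A).add (hsum B))
      intro n
      have := key n
      have h2 : (0:ℝ) ≤ (1/2:ℝ)^(n+1) := by positivity
      nlinarith
    linarith
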